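/- For every CF program p there is a polynomial π such that #Reach_p(x) ≤ π(|x|) for all x ∈ {0,1}*; concretely, every m-ary defined function of p is reachable on at most (3 + |x|)^m distinct argument tuples, since each argument ranges over V_x, a set of at most 3 + |x| values. -/

import Mathlib

/-! # Cons-free programs (CF / CFTR / CFpoly / NCF) and Turing-machine complexity classes -/

/-- Values: booleans and bit strings. -/
inductive Val : Type
  | bool : Bool → Val
  | str  : List Bool → Val
deriving DecidableEq, Inhabited

/-- Base operations of cons-free programs. -/
inductive BOp : Type
  | not | null | head | tail
deriving DecidableEq, Inhabited

/-- Expressions.  `amb` is the nondeterministic choice construct of NCF;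
CF programs are exactly the choice-free programs. -/
inductive Exp : Type
  | tt   : Exp
  | ff   : Exp
  | nil  : Exp
  | var  : Nat → Exp
  | base : BOp → Exp → Exp
  | ite  : Exp → Exp → Exp → Exp
  | call : Nat → List Exp → Exp
  | amb  : Exp → Exp → Exp
deriving Inhabited

/-- A function definition `f x1 ... xm = e`: arity `m` and body `e`
(variables are de Bruijn-style indices into the argument list). -/
structure Defn where
  arity : Nat
  body  : Exp
deriving Inhabited

/-- A program is a finite list of function definitions; the first one is the entry point. -/
abbrev Prog := List Defn

/-- Body of the entry (first) function. -/
def Prog.entry (p : Prog) : Exp := p.headI.body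

/-- Semantics of the base functions (partial). -/
def evalBase : BOp → Val → Option Val
  | .not,  .bool b       => some (.bool (!b))
  | .null, .str s        => some (.bool s.isEmpty)
  | .head, .str (b :: _) => some (.bool b)
  | .tail, .str (_ :: s) => some (.str s)
  | _,     _             => none

/- Call-by-value big-step semantics.  `EvalH p ρ e v n h` means: in environment `ρ`
the expression `e` evaluates to `v`, by a computation (proof) tree with `n` nodes
whose call history (the sequence of configurations `(f, arguments)` of calls to
program-defined functions, in evaluation order) is `h`. -/
mutual
inductive EvalH (p : Prog) : List Val → Exp → Val → Nat → List (Nat × List Val) → Prop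
  | tt  {ρ} : EvalH p ρ .tt (.bool true) 1 []
  | ff  {ρ} : EvalH p ρ .ff (.bool false) 1 []
  | nil {ρ} : EvalH p ρ .nil (.str []) 1 []
  | var {ρ : List Val} {i : Nat} {v} : ρ[i]? = some v → EvalH p ρ (.var i) v 1 []
  | base {ρ op e v w n h} :
      EvalH p ρ e v n h → evalBase op v = some w →
      EvalH p ρ (.base op e) w (n + 1) h
  | iteT {ρ e0 e1 e2 v n0 n1 h0 h1} :
      EvalH p ρ e0 (.bool true) n0 h0 → EvalH p ρ e1 v n1 h1 →
      EvalH p ρ (.ite e0 e1 e2) v (n0 + n1 + 1) (h0 ++ h1)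
  | iteF {ρ e0 e1 e2 v n0 n2 h0 h2} :
      EvalH p ρ e0 (.bool false) n0 h0 → EvalH p ρ e2 v n2 h2 →
      EvalH p ρ (.ite e0 e1 e2) v (n0 + n2 + 1) (h0 ++ h2)
  | ambL {ρ e1 e2 v n h} :
      EvalH p ρ e1 v n h → EvalH p ρ (.amb e1 e2) v (n + 1) h
  | ambR {ρ e1 e2 v n h} :
      EvalH p ρ e2 v n h → EvalH p ρ (.amb e1 e2) v (n + 1) h
  | call {ρ : List Val} {f : Nat} {es ws d v m n hs h} :
      p[f]? = some d → EvalArgsH p ρ es ws m hs → ws.length = d.arity →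
      EvalH p ws d.body v n h →
      EvalH p ρ (.call f es) v (m + n + 1) (hs ++ (f, ws) :: h)

inductive EvalArgsH (p : Prog) : List Val → List Exp → List Val → Nat → List (Nat × List Val) → Prop
  | nil {ρ} : EvalArgsH p ρ [] [] 0 []
  | cons {ρ e es v vs n m h hs} :
      EvalH p ρ e v n h → EvalArgsH p ρ es vs m hs →
      EvalArgsH p ρ (e :: es) (v :: vs) (n + m) (h ++ hs)
end

/-- `p, ρ ⊢ e → v`. -/
def Eval (p : Prog) (ρ : List Val) (e : Exp) (v : Val) : Prop := ∃ n h, EvalH p ρ e v n h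

/-- Pointwise evaluation of a list of expressions. -/
def EvalList (p : Prog) (ρ : List Val) (es : List Exp) (ws : List Val) : Prop :=
  List.Forall₂ (Eval p ρ) es ws

/-- `⟦p⟧(x) = v` with computation-tree size `n` and call history `h`. -/
def RunH (p : Prog) (x : List Bool) (v : Val) (n : Nat) (h : List (Nat × List Val)) : Prop :=
  EvalH p [Val.str x] p.entry v n h

/-- `⟦p⟧(x) = v`. -/
def Run (p : Prog) (x : List Bool) (v : Val) : Prop := ∃ n h, RunH p x v n h

/-- `time_p(x) = n`: the computation tree `T^{p,x}` has `n` nodes. -/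
def TimeIs (p : Prog) (x : List Bool) (n : Nat) : Prop := ∃ v h, RunH p x v n h

/-- Deterministic decision: `p` terminates on every input, answering `True` exactly on `X`. -/
def Decides (p : Prog) (X : Set (List Bool)) : Prop :=
  ∀ x : List Bool, (x ∈ X ∧ Run p x (.bool true)) ∨ (x ∉ X ∧ Run p x (.bool false))

/-- Nondeterministic decision: `x ∈ X` iff some computation `⟦p⟧(x) ⇝ True` exists. -/
def NDecides (p : Prog) (X : Set (List Bool)) : Prop :=
  ∀ x : List Bool, x ∈ X ↔ Run p x (.bool true)

/-- `Reach_p(x)`: configurations `(f, ρ)` called at least once in some computation of `p` on `x`. -/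
def Reach (p : Prog) (x : List Bool) : Set (Nat × List Val) :=
  {c | ∃ v n h, RunH p x v n h ∧ c ∈ h}

/-- `V_x = {0,1} ∪ suffixes(x)`: the range of variation on input `x`. -/
def Vx (x : List Bool) : Set Val :=
  {v | (∃ b, v = .bool b) ∨ ∃ s, v = .str s ∧ s <:+ x}

/-- An expression is choice-free (belongs to the CF fragment). -/
inductive NoChoice : Exp → Prop
  | tt : NoChoice .tt
  | ff : NoChoice .ff
  | nil : NoChoice .nil
  | var (i) : NoChoice (.var i)
  | base (op) {e} : NoChoice e → NoChoice (.base op e)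
  | ite {a b c} : NoChoice a → NoChoice b → NoChoice c → NoChoice (.ite a b c)
  | call (f) {es} : (∀ e ∈ es, NoChoice e) → NoChoice (.call f es)

/-- A CF program: a cons-free program with no nondeterministic choice. -/
def CFProg (p : Prog) : Prop := ∀ d ∈ p, NoChoice d.body

/-- Does the expression contain a call to a program-defined function? -/
def hasCall : Exp → Bool
  | .base _ e => hasCall e
  | .ite a b c => hasCall a || hasCall b || hasCall c
  | .call _ _ => true
  | .amb a b => hasCall a || hasCall b
  | _ => false

/-- The classification map `α` with `X = 0 < T = 1 < N = 2`:
`α e = 0` if `e` has no calls; `α e = 1` if all calls in `e` are in tail position;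
`α e = 2` otherwise. -/
def alpha : Exp → Nat
  | .base _ e => if hasCall e then 2 else 0
  | .ite a b c => if hasCall a then 2 else max (alpha b) (alpha c)
  | .call _ es => if es.all (fun e => !hasCall e) then 1 else 2
  | .amb a b => max (alpha a) (alpha b)
  | _ => 0

/-- All calls in every definition body are in tail position (`α(e^f) ∈ {X, T}`). -/
def TRProg (p : Prog) : Prop := ∀ d ∈ p, alpha d.body ≤ 1

/-- A CFTR program: a tail-recursive cons-free program. -/
def CFTRProg (p : Prog) : Prop := CFProg p ∧ TRProg p

/-- Every call in the program is a tail call or a linear call, i.e. no call to a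
defined function is nested inside the argument of another call. -/
def linearOnly : Exp → Bool
  | .base _ e => linearOnly e
  | .ite a b c => linearOnly a && linearOnly b && linearOnly c
  | .call _ es => es.all (fun e => !hasCall e)
  | .amb a b => linearOnly a && linearOnly b
  | _ => true

/-- A CFpoly program: a CF program that terminates on all inputs, in polynomial native time. -/
def CFpolyProg (p : Prog) : Prop :=
  CFProg p ∧ (∀ x, ∃ v, Run p x v) ∧
    ∃ π : Polynomial ℕ, ∀ x n, TimeIs p x n → n ≤ π.eval x.length

/-- A judgment `p, ρ ⊢ e → v` occurs in the computation tree `T^{p,x}`. -/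
inductive Occurs (p : Prog) (x : List Bool) : List Val → Exp → Val → Prop
  | root {v} : Eval p [Val.str x] p.entry v → Occurs p x [Val.str x] p.entry v
  | base {ρ op e v w} : Occurs p x ρ (.base op e) v → Eval p ρ e w → Occurs p x ρ e w
  | iteTest {ρ a b c v w} : Occurs p x ρ (.ite a b c) v → Eval p ρ a w → Occurs p x ρ a w
  | iteT {ρ a b c v} : Occurs p x ρ (.ite a b c) v → Eval p ρ a (.bool true) →
      Eval p ρ b v → Occurs p x ρ b v
  | iteF {ρ a b c v} : Occurs p x ρ (.ite a b c) v → Eval p ρ a (.bool false) →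
      Eval p ρ c v → Occurs p x ρ c v
  | ambL {ρ a b v} : Occurs p x ρ (.amb a b) v → Eval p ρ a v → Occurs p x ρ a v
  | ambR {ρ a b v} : Occurs p x ρ (.amb a b) v → Eval p ρ b v → Occurs p x ρ b v
  | arg {ρ f es v e w} : Occurs p x ρ (.call f es) v → e ∈ es → Eval p ρ e w → Occurs p x ρ e w
  | body {ρ f es ws d v} : Occurs p x ρ (.call f es) v → p[f]? = some d →
      EvalList p ρ es ws → Eval p ws d.body v → Occurs p x ws d.body v

/- The deterministic left-to-right bottom-up evaluator, with fuel bounding call depth. -/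
mutual
def evalFuel (p : Prog) : Nat → List Val → Exp → Option Val
  | _, _, .tt => some (.bool true)
  | _, _, .ff => some (.bool false)
  | _, _, .nil => some (.str [])
  | _, ρ, .var i => ρ[i]?
  | k, ρ, .base op e => (evalFuel p k ρ e).bind (evalBase op)
  | k, ρ, .ite a b c =>
      match evalFuel p k ρ a with
      | some (.bool true) => evalFuel p k ρ b
      | some (.bool false) => evalFuel p k ρ c
      | _ => none
  | _, _, .amb _ _ => none
  | k, ρ, .call f es =>
      match evalArgsFuel p k ρ es with
      | some ws =>
          match k, p[f]? with
          | k' + 1, some d => if ws.length = d.arity then evalFuel p k' ws d.body else none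
          | _, _ => none
      | none => none
termination_by k _ e => (k, sizeOf e)
decreasing_by
  all_goals first
    | decreasing_tactic
    | (simp only [wfParam] at *; decreasing_tactic)
    | (simp_wf; apply Prod.Lex.left; simp [wfParam])

def evalArgsFuel (p : Prog) : Nat → List Val → List Exp → Option (List Val)
  | _, _, [] => some []
  | k, ρ, e :: es =>
      match evalFuel p k ρ e, evalArgsFuel p k ρ es with
      | some v, some vs => some (v :: vs)
      | _, _ => none
termination_by k _ es => (k, sizeOf es)
end

/-! ## Turing machines -/

/-- Head moves. -/
inductive Dir : Type
  | L | S | R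
deriving DecidableEq, Inhabited

def Dir.z : Dir → ℤ
  | .L => -1
  | .S => 0
  | .R => 1

/-- A configuration: control state, input-head position, work-head position, work tape. -/
structure Cfg (Q : Type) where
  q : Q
  ipos : ℤ
  wpos : ℤ
  tape : ℤ → Option Bool

/-- The symbol of the read-only input tape at position `i` (blank outside the input). -/
def inputSym (x : List Bool) (i : ℤ) : Option Bool :=
  if 0 ≤ i then x[i.toNat]? else none

/-- A deterministic Turing machine with a read-only input tape and a read-write work tape. -/
structure TM where
  Q : Type
  [fin : Fintype Q]
  [deq : DecidableEq Q]
  δ : Q → Option Bool → Option Bool → Q × Option Bool × Dir × Dir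
  start : Q
  accept : Q
  reject : Q

attribute [instance] TM.fin TM.deq

def TM.init (M : TM) : Cfg M.Q := ⟨M.start, 0, 0, fun _ => none⟩

/-- One deterministic step (the accepting and rejecting states are halting). -/
def TM.step (M : TM) (x : List Bool) (c : Cfg M.Q) : Cfg M.Q :=
  if c.q = M.accept ∨ c.q = M.reject then c
  else
    let r := M.δ c.q (inputSym x c.ipos) (c.tape c.wpos)
    ⟨r.1, c.ipos + r.2.2.1.z, c.wpos + r.2.2.2.z,
      fun j => if j = c.wpos then r.2.1 else c.tape j⟩

/-- Configuration after `t` steps on input `x`. -/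
def TM.conf (M : TM) (x : List Bool) (t : Nat) : Cfg M.Q := (M.step x)^[t] M.init

/-- `M` decides `X`: reaches `accept` on members, `reject` on non-members. -/
def TM.DecidesTM (M : TM) (X : Set (List Bool)) : Prop :=
  ∀ x : List Bool,
    (x ∈ X → ∃ t, (M.conf x t).q = M.accept) ∧ (x ∉ X → ∃ t, (M.conf x t).q = M.reject)

/-- The work head of `M` stays within `s` cells of the origin on input `x`. -/
def TM.SpaceBound (M : TM) (x : List Bool) (s : Nat) : Prop :=
  ∀ t, ((M.conf x t).wpos).natAbs ≤ s

/-- `M` halts within `T` steps on input `x`. -/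
def TM.HaltsIn (M : TM) (x : List Bool) (T : Nat) : Prop :=
  ∃ t ≤ T, (M.conf x t).q = M.accept ∨ (M.conf x t).q = M.reject

/-- LOGSPACE: decidable by a deterministic TM in `O(log n)` work space. -/
def LOGSPACE : Set (Set (List Bool)) :=
  {X | ∃ M : TM, M.DecidesTM X ∧
        ∃ C : Nat, ∀ x, M.SpaceBound x (C * (Nat.log 2 x.length + 1))}

/-- PTIME: decidable by a deterministic TM in time `O(n^k)` for some `k`. -/
def PTIME : Set (Set (List Bool)) :=
  {X | ∃ M : TM, M.DecidesTM X ∧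
        ∃ C k : Nat, ∀ x, M.HaltsIn x (C * (x.length + 1) ^ k)}

/-- A nondeterministic Turing machine (read-only input tape, read-write work tape). -/
structure NTM where
  Q : Type
  [fin : Fintype Q]
  δ : Q → Option Bool → Option Bool → Finset (Q × Option Bool × Dir × Dir)
  start : Q
  accept : Q

attribute [instance] NTM.fin

def NTM.init (M : NTM) : Cfg M.Q := ⟨M.start, 0, 0, fun _ => none⟩

/-- One nondeterministic step. -/
def NTM.Step (M : NTM) (x : List Bool) (c c' : Cfg M.Q) : Prop :=
  ∃ r ∈ M.δ c.q (inputSym x c.ipos) (c.tape c.wpos),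
    c' = ⟨r.1, c.ipos + r.2.2.1.z, c.wpos + r.2.2.2.z,
          fun j => if j = c.wpos then r.2.1 else c.tape j⟩

/-- A step staying within work space `s`. -/
def NTM.StepB (M : NTM) (x : List Bool) (s : Nat) (c c' : Cfg M.Q) : Prop :=
  M.Step x c c' ∧ c'.wpos.natAbs ≤ s

/-- Some computation path within work space `s` accepts `x`. -/
def NTM.AcceptsInSpace (M : NTM) (x : List Bool) (s : Nat) : Prop :=
  ∃ c : Cfg M.Q, Relation.ReflTransGen (M.StepB x s) M.init c ∧ c.q = M.accept

/-- Nondeterministic space classes `NSPACE(O(f))`. -/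
def NSPACEF (f : Nat → Nat) : Set (Set (List Bool)) :=
  {X | ∃ (M : NTM) (C : Nat), ∀ x, x ∈ X ↔ M.AcceptsInSpace x (C * (f x.length + 1))}

/-- NLOGSPACE = NSPACE(O(log n)). -/
def NLOGSPACE : Set (Set (List Bool)) := NSPACEF (Nat.log 2)

/-! ## Decision classes of the programming languages -/

def decideCFTR : Set (Set (List Bool)) := {X | ∃ p : Prog, CFTRProg p ∧ Decides p X}
def decideCF : Set (Set (List Bool)) := {X | ∃ p : Prog, CFProg p ∧ Decides p X}
def decideCFpoly : Set (Set (List Bool)) := {X | ∃ p : Prog, CFpolyProg p ∧ Decides p X}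
def decideNCF : Set (Set (List Bool)) := {X | ∃ p : Prog, NDecides p X}
def decideNCFTR : Set (Set (List Bool)) := {X | ∃ p : Prog, TRProg p ∧ NDecides p X}


/-! ### Auxiliary material for Statement 3 -/

/-- A finite overapproximation of `V_x`. -/
def VFin (x : List Bool) : Finset Val :=
  {Val.bool true, Val.bool false} ∪
    (Finset.range (x.length + 1)).image (fun i => Val.str (x.drop i))

lemma card_VFin (x : List Bool) : (VFin x).card ≤ 3 + x.length := by
  classical
  have h1 := Finset.card_union_le ({Val.bool true, Val.bool false} : Finset Val)
    ((Finset.range (x.length + 1)).image (fun i => Val.str (x.drop i)))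
  have h2 := Finset.card_image_le (s := Finset.range (x.length + 1))
    (f := fun i => Val.str (x.drop i))
  have h3 : ({Val.bool true, Val.bool false} : Finset Val).card ≤ 2 := by
    apply le_trans (Finset.card_insert_le _ _); simp
  rw [Finset.card_range] at h2
  unfold VFin
  omega

lemma bool_mem_VFin (x : List Bool) (b : Bool) : Val.bool b ∈ VFin x := by
  cases b <;> simp [VFin]

lemma str_mem_VFin {x s : List Bool} (h : s <:+ x) : Val.str s ∈ VFin x := by
  obtain ⟨t, rfl⟩ := h
  simp only [VFin, Finset.mem_union, Finset.mem_image, Finset.mem_range]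
  right
  exact ⟨t.length, by rw [List.length_append]; omega, by simp⟩

lemma tail_mem_VFin {x : List Bool} {b : Bool} {s : List Bool}
    (h : Val.str (b :: s) ∈ VFin x) : Val.str s ∈ VFin x := by
  simp only [VFin, Finset.mem_union, Finset.mem_image, Finset.mem_range] at h ⊢
  rcases h with h | ⟨i, hi, heq⟩
  · simp at h
  · have heq' : x.drop i = b :: s := by simpa using heq
    have hlt : i < x.length := by
      by_contra hge
      have : x.drop i = [] := List.drop_eq_nil_of_le (by omega)
      rw [this] at heq'; simp at heq'
    right
    refine ⟨i + 1, by omega, ?_⟩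
    have : x.drop (i + 1) = (x.drop i).drop 1 := by
      rw [List.drop_drop]
    rw [this, heq']
    simp

lemma evalBase_mem_VFin {x : List Bool} {op : BOp} {v w : Val}
    (h : evalBase op v = some w) (hv : v ∈ VFin x) : w ∈ VFin x := by
  cases op <;> cases v <;> simp [evalBase] at h
  · subst h; exact bool_mem_VFin x _
  · subst h; exact bool_mem_VFin x _
  · rename_i s; cases s with
    | nil => simp at h
    | cons b t => simp at h; subst h; exact bool_mem_VFin x _
  · rename_i s; cases s with
    | nil => simp at h
    | cons b t => simp at h; subst h; exact tail_mem_VFin hv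

lemma evalH_pos {p : Prog} {ρ e v n h} (H : EvalH p ρ e v n h) : 1 ≤ n := by
  cases H <;> omega

/-- A configuration with correct arity and all arguments in `VFin`. -/
def GoodCfg (p : Prog) (x : List Bool) (c : Nat × List Val) : Prop :=
  ∃ d, p[c.1]? = some d ∧ c.2.length = d.arity ∧ ∀ u ∈ c.2, u ∈ VFin x

lemma evalH_main (p : Prog) (x : List Bool) : ∀ N : ℕ,
    (∀ ρ e v n h, n ≤ N → EvalH p ρ e v n h → (∀ u ∈ ρ, u ∈ VFin x) →
      v ∈ VFin x ∧ ∀ c ∈ h, GoodCfg p x c) ∧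
    (∀ ρ es vs n hs, n ≤ N → EvalArgsH p ρ es vs n hs → (∀ u ∈ ρ, u ∈ VFin x) →
      (∀ u ∈ vs, u ∈ VFin x) ∧ ∀ c ∈ hs, GoodCfg p x c) := by
  intro N
  induction N with
  | zero =>
    constructor
    · intro ρ e v n h hn H _
      exact absurd (evalH_pos H) (by omega)
    · intro ρ es vs n hs hn H henv
      cases H with
      | nil => exact ⟨by simp, by simp⟩
      | cons h1 _ => exact absurd (evalH_pos h1) (by omega)
  | succ N IH =>
    obtain ⟨IH1, IH2⟩ := IH
    have H1 : ∀ ρ e v n h, n ≤ N + 1 → EvalH p ρ e v n h → (∀ u ∈ ρ, u ∈ VFin x) →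
        v ∈ VFin x ∧ ∀ c ∈ h, GoodCfg p x c := by
      intro ρ e v n h hn H henv
      cases H with
      | tt => exact ⟨bool_mem_VFin x _, by simp⟩
      | ff => exact ⟨bool_mem_VFin x _, by simp⟩
      | nil => exact ⟨str_mem_VFin List.nil_suffix, by simp⟩
      | var hv =>
        refine ⟨henv _ ?_, by simp⟩
        exact List.mem_of_getElem? hv
      | base He hb =>
        obtain ⟨h1, h2⟩ := IH1 _ _ _ _ _ (by omega) He henv
        exact ⟨evalBase_mem_VFin hb h1, h2⟩
      | iteT H0 Hb =>
        obtain ⟨_, h2⟩ := IH1 _ _ _ _ _ (by omega) H0 henv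
        obtain ⟨h3, h4⟩ := IH1 _ _ _ _ _ (by omega) Hb henv
        refine ⟨h3, ?_⟩
        intro c hc
        rcases List.mem_append.mp hc with hc | hc
        · exact h2 c hc
        · exact h4 c hc
      | iteF H0 Hb =>
        obtain ⟨_, h2⟩ := IH1 _ _ _ _ _ (by omega) H0 henv
        obtain ⟨h3, h4⟩ := IH1 _ _ _ _ _ (by omega) Hb henv
        refine ⟨h3, ?_⟩
        intro c hc
        rcases List.mem_append.mp hc with hc | hc
        · exact h2 c hc
        · exact h4 c hc
      | ambL He =>
        exact IH1 _ _ _ _ _ (by omega) He henv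
      | ambR He =>
        exact IH1 _ _ _ _ _ (by omega) He henv
      | call hf Hargs hlen Hbody =>
        have pos := evalH_pos Hbody
        obtain ⟨hws, hhs⟩ := IH2 _ _ _ _ _ (by omega) Hargs henv
        obtain ⟨hv, hh⟩ := IH1 _ _ _ _ _ (by omega) Hbody hws
        refine ⟨hv, ?_⟩
        intro c hc
        rcases List.mem_append.mp hc with hc | hc
        · exact hhs c hc
        · rcases List.mem_cons.mp hc with rfl | hc
          · exact ⟨_, hf, hlen, hws⟩
          · exact hh c hc
    refine ⟨H1, ?_⟩
    intro ρ es vs n hs hn H henv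
    cases H with
    | nil => exact ⟨by simp, by simp⟩
    | cons He Hes =>
      have pos := evalH_pos He
      obtain ⟨h1, h2⟩ := H1 _ _ _ _ _ (by omega) He henv
      obtain ⟨h3, h4⟩ := IH2 _ _ _ _ _ (by omega) Hes henv
      constructor
      · intro u hu
        rcases List.mem_cons.mp hu with rfl | hu
        · exact h1
        · exact h3 u hu
      · intro c hc
        rcases List.mem_append.mp hc with hc | hc
        · exact h2 c hc
        · exact h4 c hc

lemma reach_good {p : Prog} {x : List Bool} {c : Nat × List Val}
    (hc : c ∈ Reach p x) : GoodCfg p x c := by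
  obtain ⟨v, n, h, hrun, hmem⟩ := hc
  have henv : ∀ u ∈ [Val.str x], u ∈ VFin x := by
    intro u hu
    simp only [List.mem_singleton] at hu
    subst hu
    exact str_mem_VFin (List.suffix_refl x)
  exact ((evalH_main p x n).1 _ _ _ _ _ le_rfl hrun henv).2 c hmem

/-- Lists of a fixed length with entries in `VFin x`. -/
def TSet (x : List Bool) (m : ℕ) : Set (List Val) :=
  {ρ | ρ.length = m ∧ ∀ u ∈ ρ, u ∈ VFin x}

lemma TSet_bound (x : List Bool) :
    ∀ m, (TSet x m).Finite ∧ (TSet x m).ncard ≤ (3 + x.length) ^ m := by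
  intro m
  induction m with
  | zero =>
    have h0 : TSet x 0 = {[]} := by
      ext ρ
      constructor
      · rintro ⟨hlen, -⟩; exact List.length_eq_zero_iff.mp hlen
      · rintro rfl; exact ⟨rfl, by simp⟩
    rw [h0]
    exact ⟨Set.finite_singleton _, by simp⟩
  | succ m IH =>
    obtain ⟨hfin, hcard⟩ := IH
    have hsub : TSet x (m + 1) ⊆
        (fun q : Val × List Val => q.1 :: q.2) '' ((VFin x : Set Val) ×ˢ TSet x m) := by
      rintro ρ ⟨hlen, hmem⟩
      cases ρ with
      | nil => simp at hlen
      | cons a l =>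
        refine ⟨(a, l), ⟨hmem a (by simp), ⟨by simpa using hlen,
          fun u hu => hmem u (by simp [hu])⟩⟩, rfl⟩
    have hprodeq : (VFin x : Set Val) ×ˢ TSet x m = ↑((VFin x) ×ˢ hfin.toFinset) := by
      rw [Finset.coe_product, hfin.coe_toFinset]
    have hfin2 : ((VFin x : Set Val) ×ˢ TSet x m).Finite := by
      rw [hprodeq]; exact Finset.finite_toSet _
    refine ⟨(hfin2.image _).subset hsub, ?_⟩
    calc (TSet x (m + 1)).ncard
        ≤ ((fun q : Val × List Val => q.1 :: q.2) ''
            ((VFin x : Set Val) ×ˢ TSet x m)).ncard :=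
          Set.ncard_le_ncard hsub (hfin2.image _)
      _ ≤ ((VFin x : Set Val) ×ˢ TSet x m).ncard := Set.ncard_image_le hfin2
      _ = ((VFin x) ×ˢ hfin.toFinset).card := by
          rw [hprodeq, Set.ncard_coe_finset]
      _ = (VFin x).card * hfin.toFinset.card := Finset.card_product _ _
      _ = (VFin x).card * (TSet x m).ncard := by
          rw [Set.ncard_eq_toFinset_card _ hfin]
      _ ≤ (3 + x.length) * (3 + x.length) ^ m :=
          Nat.mul_le_mul (card_VFin x) hcard
      _ = (3 + x.length) ^ (m + 1) := by ring

/-- Lists of length at most `A` with entries in `VFin x`. -/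
def USet (x : List Bool) (A : ℕ) : Set (List Val) :=
  {ρ | ρ.length ≤ A ∧ ∀ u ∈ ρ, u ∈ VFin x}

lemma USet_bound (x : List Bool) :
    ∀ A, (USet x A).Finite ∧ (USet x A).ncard ≤ (A + 1) * (3 + x.length) ^ A := by
  intro A
  induction A with
  | zero =>
    have h0 : USet x 0 = TSet x 0 := by
      ext ρ; simp [USet, TSet, Nat.le_zero]
    rw [h0]
    exact ⟨(TSet_bound x 0).1, by simpa using (TSet_bound x 0).2⟩
  | succ A IH =>
    obtain ⟨hfin, hcard⟩ := IH
    have hsplit : USet x (A + 1) = USet x A ∪ TSet x (A + 1) := by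
      ext ρ
      simp only [USet, TSet, Set.mem_setOf_eq, Set.mem_union]
      constructor
      · rintro ⟨hl, hm⟩
        rcases Nat.lt_or_ge ρ.length (A + 1) with hlt | hge
        · exact Or.inl ⟨by omega, hm⟩
        · exact Or.inr ⟨by omega, hm⟩
      · rintro (⟨hl, hm⟩ | ⟨hl, hm⟩)
        · exact ⟨by omega, hm⟩
        · exact ⟨by omega, hm⟩
    obtain ⟨hfinT, hcardT⟩ := TSet_bound x (A + 1)
    have hpow : (3 + x.length) ^ A ≤ (3 + x.length) ^ (A + 1) :=
      Nat.pow_le_pow_right (by omega) (by omega)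
    refine ⟨by rw [hsplit]; exact hfin.union hfinT, ?_⟩
    calc (USet x (A + 1)).ncard
        ≤ (USet x A).ncard + (TSet x (A + 1)).ncard := by
          rw [hsplit]; exact Set.ncard_union_le _ _
      _ ≤ (A + 1) * (3 + x.length) ^ A + (3 + x.length) ^ (A + 1) := by omega
      _ ≤ (A + 1) * (3 + x.length) ^ (A + 1) + (3 + x.length) ^ (A + 1) :=
          Nat.add_le_add_right (Nat.mul_le_mul_left _ hpow) _
      _ = (A + 1 + 1) * (3 + x.length) ^ (A + 1) := by ring

lemma le_foldr_max {a : ℕ} : ∀ {l : List ℕ}, a ∈ l → a ≤ l.foldr max 0 := by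
  intro l
  induction l with
  | nil => simp
  | cons b l IH =>
    intro h
    rcases List.mem_cons.mp h with rfl | h
    · exact le_max_left _ _
    · exact le_trans (IH h) (le_max_right _ _)

/-- for every CF program `p` there is a polynomial `π` with
`#Reach_p(x) ≤ π(|x|)` for all inputs `x`; concretely, every `m`-ary defined function
is reachable on at most `(3 + |x|)^m` distinct argument tuples. -/
theorem reach_polynomially_bounded (p : Prog) (hp : CFProg p) :
    (∃ π : Polynomial ℕ, ∀ x : List Bool,
        (Reach p x).Finite ∧ (Reach p x).ncard ≤ π.eval x.length) ∧
    (∀ (x : List Bool) (f : Nat) (d : Defn), p[f]? = some d →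
        {ρ : List Val | (f, ρ) ∈ Reach p x}.ncard ≤ (3 + x.length) ^ d.arity) := by
  classical
  set A := (p.map Defn.arity).foldr max 0 with hA
  have harity : ∀ {f : Nat} {d : Defn}, p[f]? = some d → d.arity ≤ A := by
    intro f d hf
    have hd : d ∈ p := List.mem_of_getElem? hf
    exact le_foldr_max (List.mem_map_of_mem hd)
  constructor
  · refine ⟨Polynomial.C (p.length * (A + 1)) * (Polynomial.X + Polynomial.C 3) ^ A, ?_⟩
    intro x
    obtain ⟨hUfin, hUcard⟩ := USet_bound x A
    have hsub : Reach p x ⊆ ↑((Finset.range p.length) ×ˢ hUfin.toFinset) := by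
      intro c hc
      obtain ⟨d, hf, hlen, hmem⟩ := reach_good hc
      rw [Finset.mem_coe, Finset.mem_product]
      constructor
      · rw [Finset.mem_range]
        exact (List.getElem?_eq_some_iff.mp hf).1
      · rw [Set.Finite.mem_toFinset]
        exact ⟨by rw [hlen]; exact harity hf, hmem⟩
    have hfin : (Reach p x).Finite := Set.Finite.subset (Finset.finite_toSet _) hsub
    have hb : (Reach p x).ncard ≤ p.length * ((A + 1) * (3 + x.length) ^ A) := by
      calc (Reach p x).ncard
          ≤ (((Finset.range p.length) ×ˢ hUfin.toFinset : Finset (Nat × List Val)) :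
              Set (Nat × List Val)).ncard := Set.ncard_le_ncard hsub (Finset.finite_toSet _)
        _ = ((Finset.range p.length) ×ˢ hUfin.toFinset).card := Set.ncard_coe_finset _
        _ = p.length * hUfin.toFinset.card := by rw [Finset.card_product, Finset.card_range]
        _ = p.length * (USet x A).ncard := by rw [Set.ncard_eq_toFinset_card _ hUfin]
        _ ≤ p.length * ((A + 1) * (3 + x.length) ^ A) := Nat.mul_le_mul_left _ hUcard
    have heq : (Polynomial.C (p.length * (A + 1)) * (Polynomial.X + Polynomial.C 3) ^ A).eval
        x.length = p.length * ((A + 1) * (3 + x.length) ^ A) := by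
      simp only [Polynomial.eval_mul, Polynomial.eval_C, Polynomial.eval_pow,
        Polynomial.eval_add, Polynomial.eval_X]
      ring
    exact ⟨hfin, heq ▸ hb⟩
  · intro x f d hf
    have hsub : {ρ : List Val | (f, ρ) ∈ Reach p x} ⊆ TSet x d.arity := by
      intro ρ hρ
      obtain ⟨d', hf', hlen, hmem⟩ := reach_good hρ
      rw [hf] at hf'
      cases hf'
      exact ⟨hlen, hmem⟩
    exact le_trans (Set.ncard_le_ncard hsub (TSet_bound x d.arity).1)
      (TSet_bound x d.arity).2
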